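/- Let ζ₁,…,ζ_N ∈ ℝ, let ν = (1/N) Σ_{i=1}^N δ_{ζᵢ}, and let ε > 0. Then sup{ Var_{ζ∼Q}[ζ] : Q ∈ 𝒫₂(ℝ), W₂(Q, ν) ≤ ε } = ( sqrt( (1/N) Σ_{i=1}^N ζᵢ² − ( (1/N) Σ_{i=1}^N ζᵢ )² ) + ε )². -/

import Mathlib

open MeasureTheory
open scoped ENNReal

/-- The `p`-th power transport cost of a coupling `π` with ground cost `d`. -/
noncomputable def transportCost {α : Type*} [MeasurableSpace α]
    (p : ℝ) (d : α → α → ℝ) (π : Measure (α × α)) : ℝ≥0∞ :=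
  ∫⁻ w, ENNReal.ofReal (d w.1 w.2 ^ p) ∂π

/-- The `p`-Wasserstein distance between `μ` and `ν` with ground cost `d`:
the infimum of the `p`-th root of the transport cost over all couplings. -/
noncomputable def wassersteinDist {α : Type*} [MeasurableSpace α]
    (p : ℝ) (d : α → α → ℝ) (μ ν : Measure α) : ℝ≥0∞ :=
  (⨅ (π : Measure (α × α)) (_ : IsProbabilityMeasure π ∧
      π.map Prod.fst = μ ∧ π.map Prod.snd = ν), transportCost p d π) ^ (1 / p)

/-- The empirical distribution of the points `ξ 1, …, ξ N`. -/
noncomputable def empMeasure {α : Type*} [MeasurableSpace α] {N : ℕ}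
    (ξ : Fin N → α) : Measure α :=
  (N : ℝ≥0∞)⁻¹ • ∑ i, Measure.dirac (ξ i)

/-- Probability measures on `ℝ` supported on `S`, with finite `p`-th moment, within
`p`-Wasserstein distance (with cost `|·|`) `ε` of `ν`. -/
def realWassersteinBall (p : ℝ) (S : Set ℝ) (ν : Measure ℝ) (ε : ℝ) : Set (Measure ℝ) :=
  {Q | IsProbabilityMeasure Q ∧ Q Sᶜ = 0 ∧
    (∫⁻ t, ENNReal.ofReal (|t| ^ p) ∂Q) < ⊤ ∧
    wassersteinDist p (fun a b => |a - b|) Q ν ≤ ENNReal.ofReal ε}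

section helpers
set_option linter.unusedSectionVars false
variable {α : Type*} [MeasurableSpace α] [MeasurableSingletonClass α]

lemma lintegral_smulsum {M : ℕ} (c : ℝ≥0∞) (x : Fin M → α) (f : α → ℝ≥0∞) :
    ∫⁻ a, f a ∂((c • ∑ i, Measure.dirac (x i)) : Measure α) = c * ∑ i, f (x i) := by
  rw [lintegral_smul_measure, lintegral_finset_sum_measure]
  simp [lintegral_dirac]

lemma lintegral_empMeasure {M : ℕ} (x : Fin M → α) (f : α → ℝ≥0∞) :
    ∫⁻ a, f a ∂(empMeasure x) = (M : ℝ≥0∞)⁻¹ * ∑ i, f (x i) :=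
  lintegral_smulsum _ x f

lemma integrable_dirac'' {E : Type*} [NormedAddCommGroup E] {f : α → E}
    (hf : StronglyMeasurable f) (a : α) : Integrable f (Measure.dirac a) := by
  refine ⟨hf.aestronglyMeasurable, ?_⟩
  simp [HasFiniteIntegral, lintegral_dirac]

lemma integral_empMeasure {M : ℕ} (x : Fin M → α) {f : α → ℝ}
    (hf : StronglyMeasurable f) :
    ∫ a, f a ∂(empMeasure x) = (M : ℝ)⁻¹ * ∑ i, f (x i) := by
  rw [empMeasure, integral_smul_measure,
    integral_finset_sum_measure (fun i _ => integrable_dirac'' hf (x i))]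
  simp [integral_dirac, smul_eq_mul]

lemma map_empMeasure {β : Type*} [MeasurableSpace β] {M : ℕ} (x : Fin M → α)
    {f : α → β} (hf : Measurable f) :
    (empMeasure x).map f = empMeasure (fun i => f (x i)) := by
  rw [empMeasure, empMeasure, Measure.map_smul]
  congr 1
  classical
  induction (Finset.univ : Finset (Fin M)) using Finset.induction_on with
  | empty => simp
  | insert a s h ih => simp [Finset.sum_insert h, Measure.map_add _ _ hf, ih, Measure.map_dirac' hf]

lemma isProbability_empMeasure {M : ℕ} (hM : 0 < M) (x : Fin M → α) :
    IsProbabilityMeasure (empMeasure x) := by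
  constructor
  rw [empMeasure, Measure.smul_apply, Measure.finset_sum_apply]
  simp only [Measure.dirac_apply_of_mem (Set.mem_univ _), Finset.sum_const,
    Finset.card_univ, Fintype.card_fin, nsmul_eq_mul, mul_one, smul_eq_mul]
  exact ENNReal.inv_mul_cancel (by exact_mod_cast hM.ne') (ENNReal.natCast_ne_top M)

lemma memLp2_empMeasure {M : ℕ} (hM : 0 < M) (x : Fin M → ℝ) :
    MemLp id 2 (empMeasure x) := by
  refine ⟨aestronglyMeasurable_id, ?_⟩
  rw [eLpNorm_eq_lintegral_rpow_enorm_toReal (by norm_num) (by norm_num)]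
  refine ENNReal.rpow_lt_top_of_nonneg (by norm_num) ?_
  rw [lintegral_empMeasure]
  refine ENNReal.mul_ne_top (ENNReal.inv_ne_top.2 (by exact_mod_cast hM.ne')) ?_
  refine (ENNReal.sum_lt_top.2 fun i _ => ?_).ne
  exact ENNReal.rpow_lt_top_of_nonneg (by norm_num) (by simp)

lemma empMeasure_const {M : ℕ} (hM : 0 < M) (a : α) :
    empMeasure (fun _ : Fin M => a) = Measure.dirac a := by
  rw [empMeasure]
  simp only [Finset.sum_const, Finset.card_univ, Fintype.card_fin]
  rw [← Nat.cast_smul_eq_nsmul ℝ≥0∞ M, smul_smul,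
    ENNReal.inv_mul_cancel (by exact_mod_cast hM.ne') (ENNReal.natCast_ne_top M), one_smul]

end helpers

lemma habs2 (x : ℝ) : |x| ^ (2:ℝ) = x ^ 2 := by
  rw [show (2:ℝ) = ((2:ℕ):ℝ) by norm_num, Real.rpow_natCast, sq_abs]

lemma pow_half' (y : ℝ≥0∞) : (y ^ (2:ℕ)) ^ (1/2 : ℝ) = y := by
  rw [← ENNReal.rpow_natCast, ← ENNReal.rpow_mul]
  norm_num

lemma sq_rpow' (y : ℝ≥0∞) : (y ^ (1/2 : ℝ)) ^ (2:ℝ) = y := by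
  rw [← ENNReal.rpow_mul]; norm_num

lemma variance_empMeasure {M : ℕ} (hM : 0 < M) (x : Fin M → ℝ) :
    ProbabilityTheory.variance id (empMeasure x) =
      (M : ℝ)⁻¹ * ∑ i, (x i) ^ 2 - ((M : ℝ)⁻¹ * ∑ i, x i) ^ 2 := by
  haveI := isProbability_empMeasure hM x
  rw [ProbabilityTheory.variance_eq_sub (memLp2_empMeasure hM x)]
  have h1 : ∫ a, (id ^ 2 : ℝ → ℝ) a ∂(empMeasure x) = (M : ℝ)⁻¹ * ∑ i, (x i) ^ 2 := by
    have := integral_empMeasure x (f := fun a : ℝ => a ^ 2)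
      ((measurable_id.pow_const 2).stronglyMeasurable)
    simpa using this
  have h2 : ∫ a, id a ∂(empMeasure x) = (M : ℝ)⁻¹ * ∑ i, x i :=
    integral_empMeasure x stronglyMeasurable_id
  rw [h1, h2]

lemma ballMem {M : ℕ} (hM : 0 < M) (a η : Fin M → ℝ) {ε : ℝ} (hε : 0 ≤ ε)
    (hcost : (M:ℝ)⁻¹ * ∑ i, (η i - a i)^2 ≤ ε^2) :
    empMeasure η ∈ realWassersteinBall 2 Set.univ (empMeasure a) ε := by
  have hMinv : ((M : ℝ≥0∞))⁻¹ = ENNReal.ofReal ((M:ℝ)⁻¹) := by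
    rw [ENNReal.ofReal_inv_of_pos (by exact_mod_cast hM), ENNReal.ofReal_natCast]
  refine ⟨isProbability_empMeasure hM η, by simp, ?_, ?_⟩
  · rw [lintegral_empMeasure]
    refine ENNReal.mul_lt_top ?_ ?_
    · exact (ENNReal.inv_le_one.2 (by exact_mod_cast hM)).trans_lt ENNReal.one_lt_top
    · exact ENNReal.sum_lt_top.2 fun i _ => ENNReal.ofReal_lt_top
  · set π : Measure (ℝ × ℝ) := empMeasure (fun i => (η i, a i)) with hπ
    have hcost' : transportCost 2 (fun a b => |a - b|) π ≤ ENNReal.ofReal (ε^2) := by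
      rw [transportCost, hπ, lintegral_empMeasure]
      simp only [habs2]
      rw [hMinv, ← ENNReal.ofReal_sum_of_nonneg (fun i _ => sq_nonneg _),
        ← ENNReal.ofReal_mul (by positivity)]
      exact ENNReal.ofReal_le_ofReal hcost
    have hle : wassersteinDist 2 (fun a b => |a - b|) (empMeasure η) (empMeasure a)
        ≤ (ENNReal.ofReal (ε^2)) ^ (1/2 : ℝ) := by
      refine ENNReal.rpow_le_rpow ?_ (by norm_num)
      refine iInf_le_of_le π (iInf_le_of_le ?_ le_rfl) |>.trans hcost'
      exact ⟨isProbability_empMeasure hM _,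
        map_empMeasure _ measurable_fst, map_empMeasure _ measurable_snd⟩
    calc wassersteinDist 2 (fun a b => |a - b|) (empMeasure η) (empMeasure a)
        ≤ (ENNReal.ofReal (ε^2)) ^ (1/2 : ℝ) := hle
      _ = ENNReal.ofReal ε := by rw [ENNReal.ofReal_pow hε, pow_half']

lemma upperBound {N : ℕ} (hN : 0 < N) (ζ : Fin N → ℝ) {ε : ℝ} (hε : 0 < ε)
    (m s : ℝ) (hs : 0 ≤ s) (hsum : (N:ℝ)⁻¹ * ∑ i, (ζ i - m)^2 = s^2)
    {Q : Measure ℝ} (hQ : Q ∈ realWassersteinBall 2 Set.univ (empMeasure ζ) ε) :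
    ProbabilityTheory.variance id Q ≤ (s + ε)^2 := by
  obtain ⟨hQprob, -, hmom, hdist⟩ := hQ
  -- pointwise identity for nnnorm
  have hpt : ∀ t : ℝ, ((‖t‖₊ : ℝ≥0∞)) ^ (2:ℝ) = ENNReal.ofReal (|t| ^ (2:ℝ)) := by
    intro t
    rw [← enorm_eq_nnnorm, Real.enorm_eq_ofReal_abs, ENNReal.ofReal_rpow_of_nonneg (abs_nonneg t) (by norm_num)]
  have hml2 : MemLp id 2 Q := by
    refine ⟨aestronglyMeasurable_id, ?_⟩
    rw [eLpNorm_eq_lintegral_rpow_enorm_toReal (by norm_num) (by norm_num)]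
    refine ENNReal.rpow_lt_top_of_nonneg (by norm_num) ?_
    have : ∫⁻ t, ((‖(id t : ℝ)‖₊ : ℝ≥0∞)) ^ ((2:ℝ≥0∞).toReal) ∂Q
        = ∫⁻ t, ENNReal.ofReal (|t| ^ (2:ℝ)) ∂Q := by
      apply lintegral_congr; intro t; simpa using hpt t
    simp only [enorm_eq_nnnorm]; rw [this]
    exact hmom.ne
  have hidint : Integrable id Q := hml2.integrable one_le_two
  have hsqint : Integrable (fun x : ℝ => x^2) Q := by
    have := hml2.integrable_sq; simpa using this
  set A : ℝ≥0∞ := ∫⁻ x, ENNReal.ofReal ((x - m)^2) ∂Q with hA_def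
  -- key coupling inequality
  have key : ∀ π : Measure (ℝ×ℝ), IsProbabilityMeasure π → π.map Prod.fst = Q →
      π.map Prod.snd = empMeasure ζ →
      A ^ (1/2:ℝ) ≤ (transportCost 2 (fun a b => |a - b|) π) ^ (1/2:ℝ) + ENNReal.ofReal s := by
    intro π hπ hfst hsnd
    set g : ℝ×ℝ → ℝ≥0∞ := fun w => ENNReal.ofReal |w.1 - w.2| with hg_def
    set h : ℝ×ℝ → ℝ≥0∞ := fun w => ENNReal.ofReal |w.2 - m| with hh_def
    have hgm : AEMeasurable g π :=
      ((measurable_fst.sub measurable_snd).abs.ennreal_ofReal).aemeasurable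
    have hhm : AEMeasurable h π :=
      ((measurable_snd.sub_const m).abs.ennreal_ofReal).aemeasurable
    have hA1 : A = ∫⁻ w : ℝ×ℝ, ENNReal.ofReal ((w.1 - m)^2) ∂π := by
      rw [hA_def, ← hfst,
        lintegral_map (f := fun x : ℝ => ENNReal.ofReal ((x - m)^2))
          (((measurable_id'.sub_const m).pow_const 2).ennreal_ofReal) measurable_fst]
    have step1 : A ^ (1/2:ℝ) ≤ (∫⁻ w, ((g + h) w) ^ (2:ℝ) ∂π) ^ (1/2:ℝ) := by
      refine ENNReal.rpow_le_rpow ?_ (by norm_num)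
      rw [hA1]
      refine lintegral_mono fun w => ?_
      have htri : |w.1 - m| ≤ |w.1 - w.2| + |w.2 - m| := abs_sub_le _ _ _
      calc ENNReal.ofReal ((w.1 - m)^2) = (ENNReal.ofReal |w.1 - m|) ^ (2:ℝ) := by
            rw [ENNReal.ofReal_rpow_of_nonneg (abs_nonneg _) (by norm_num), habs2]
        _ ≤ ((g + h) w) ^ (2:ℝ) := by
            refine ENNReal.rpow_le_rpow ?_ (by norm_num)
            refine (ENNReal.ofReal_le_ofReal htri).trans ?_
            exact ENNReal.ofReal_add_le
    have step2 : (∫⁻ w, ((g + h) w) ^ (2:ℝ) ∂π) ^ (1/2:ℝ) ≤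
        (∫⁻ w, (g w) ^ (2:ℝ) ∂π) ^ (1/2:ℝ) + (∫⁻ w, (h w) ^ (2:ℝ) ∂π) ^ (1/2:ℝ) :=
      ENNReal.lintegral_Lp_add_le hgm hhm one_le_two
    have hG : ∫⁻ w, (g w) ^ (2:ℝ) ∂π = transportCost 2 (fun a b => |a - b|) π := by
      rw [transportCost]
      apply lintegral_congr; intro w
      rw [hg_def, ENNReal.ofReal_rpow_of_nonneg (abs_nonneg _) (by norm_num)]
    have hH : ∫⁻ w, (h w) ^ (2:ℝ) ∂π = ENNReal.ofReal (s^2) := by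
      have : ∫⁻ w : ℝ×ℝ, (h w) ^ (2:ℝ) ∂π = ∫⁻ y, ENNReal.ofReal ((y - m)^2) ∂(empMeasure ζ) := by
        rw [← hsnd,
          lintegral_map (f := fun y : ℝ => ENNReal.ofReal ((y - m)^2))
            (((measurable_id'.sub_const m).pow_const 2).ennreal_ofReal) measurable_snd]
        apply lintegral_congr; intro w
        rw [hh_def, ENNReal.ofReal_rpow_of_nonneg (abs_nonneg _) (by norm_num), habs2]
      rw [this, lintegral_empMeasure]
      have hconv : ((N:ℕ) : ℝ≥0∞)⁻¹ * ∑ i, ENNReal.ofReal ((ζ i - m)^2)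
          = ENNReal.ofReal ((N:ℝ)⁻¹ * ∑ i, (ζ i - m)^2) := by
        rw [ENNReal.ofReal_mul (by positivity),
          ENNReal.ofReal_sum_of_nonneg (fun i _ => sq_nonneg _),
          ENNReal.ofReal_inv_of_pos (by exact_mod_cast hN), ENNReal.ofReal_natCast]
      rw [hconv, hsum]
    calc A ^ (1/2:ℝ) ≤ (∫⁻ w, ((g + h) w) ^ (2:ℝ) ∂π) ^ (1/2:ℝ) := step1
      _ ≤ (∫⁻ w, (g w) ^ (2:ℝ) ∂π) ^ (1/2:ℝ) + (∫⁻ w, (h w) ^ (2:ℝ) ∂π) ^ (1/2:ℝ) := step2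
      _ = (transportCost 2 (fun a b => |a - b|) π) ^ (1/2:ℝ) + ENNReal.ofReal s := by
          rw [hG, hH, ENNReal.ofReal_pow hs, pow_half']
  -- derive A ≤ ofReal ((ε+s)^2)
  set B : ℝ≥0∞ := A ^ (1/2:ℝ) - ENNReal.ofReal s with hB_def
  have hB2 : B ^ (2:ℝ) ≤ ⨅ (π : Measure (ℝ × ℝ)) (_ : IsProbabilityMeasure π ∧
      π.map Prod.fst = Q ∧ π.map Prod.snd = empMeasure ζ),
      transportCost 2 (fun a b => |a - b|) π := by
    refine le_iInf fun π => le_iInf fun hπ => ?_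
    have h1 := key π hπ.1 hπ.2.1 hπ.2.2
    have h2 : B ≤ (transportCost 2 (fun a b => |a - b|) π) ^ (1/2:ℝ) :=
      tsub_le_iff_right.mpr h1
    calc B ^ (2:ℝ) ≤ ((transportCost 2 (fun a b => |a - b|) π) ^ (1/2:ℝ)) ^ (2:ℝ) :=
          ENNReal.rpow_le_rpow h2 (by norm_num)
      _ = transportCost 2 (fun a b => |a - b|) π := sq_rpow' _
  have hBW : B ≤ ENNReal.ofReal ε := by
    have h3 : (B ^ (2:ℝ)) ^ (1/2:ℝ) ≤ wassersteinDist 2 (fun a b => |a - b|) Q (empMeasure ζ) :=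
      ENNReal.rpow_le_rpow hB2 (by norm_num)
    have h4 : (B ^ (2:ℝ)) ^ (1/2:ℝ) = B := by rw [← ENNReal.rpow_mul]; norm_num
    rw [h4] at h3
    exact h3.trans hdist
  have hAhalf : A ^ (1/2:ℝ) ≤ ENNReal.ofReal (ε + s) := by
    calc A ^ (1/2:ℝ) ≤ B + ENNReal.ofReal s := le_tsub_add
      _ ≤ ENNReal.ofReal ε + ENNReal.ofReal s := add_le_add_left hBW _
      _ = ENNReal.ofReal (ε + s) := (ENNReal.ofReal_add hε.le hs).symm
  have hA : A ≤ ENNReal.ofReal ((ε + s)^2) := by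
    have h5 : (A ^ (1/2:ℝ)) ^ (2:ℝ) ≤ (ENNReal.ofReal (ε + s)) ^ (2:ℝ) :=
      ENNReal.rpow_le_rpow hAhalf (by norm_num)
    rw [sq_rpow'] at h5
    calc A ≤ (ENNReal.ofReal (ε + s)) ^ (2:ℝ) := h5
      _ = ENNReal.ofReal ((ε + s) ^ (2:ℝ)) :=
          ENNReal.ofReal_rpow_of_nonneg (by positivity) (by norm_num)
      _ = ENNReal.ofReal ((ε + s) ^ 2) := by
          rw [show ((ε+s) ^ (2:ℝ)) = ((ε+s) ^ (2:ℕ)) by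
            rw [show (2:ℝ) = ((2:ℕ):ℝ) by norm_num, Real.rpow_natCast]]
  -- real side
  have hAr : ∫ x, (x - m)^2 ∂Q = A.toReal := by
    rw [hA_def]
    exact integral_eq_lintegral_of_nonneg_ae (Filter.Eventually.of_forall fun x => sq_nonneg _)
      ((continuous_id.sub continuous_const).pow 2).aestronglyMeasurable
  have hAle : A.toReal ≤ (ε + s)^2 := ENNReal.toReal_le_of_le_ofReal (by positivity) hA
  have hexp : ∫ x, (x - m)^2 ∂Q = (∫ x, x^2 ∂Q) - 2*m*(∫ x, x ∂Q) + m^2 := by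
    have hptr : ∀ x : ℝ, (x - m)^2 = x^2 - (2*m)*x + m^2 := fun x => by ring
    simp_rw [hptr]
    have hlin : Integrable (fun x : ℝ => 2*m*x) Q := by
      simpa using hidint.const_mul (2*m)
    have hsub : Integrable (fun x : ℝ => x^2 - 2*m*x) Q := by exact hsqint.sub hlin
    rw [integral_add hsub (integrable_const _), integral_sub hsqint hlin,
      integral_const_mul, integral_const]
    simp [measure_univ]
  have hvar : ProbabilityTheory.variance id Q = (∫ x, x^2 ∂Q) - (∫ x, x ∂Q)^2 := by
    rw [ProbabilityTheory.variance_eq_sub hml2]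
    simp only [Pi.pow_apply, id_eq]
  have hfin : (∫ x, x^2 ∂Q) - 2*m*(∫ x, x ∂Q) + m^2 ≤ (ε + s)^2 := by
    rw [← hexp, hAr]; exact hAle
  rw [hvar]
  nlinarith [sq_nonneg ((∫ x, x ∂Q) - m)]


/-- Worst-case variance over a `2`-Wasserstein ball around an empirical
distribution on `ℝ`: `sup = (sample standard deviation + ε)²`. -/
theorem statement18 {N : ℕ} (hN : 0 < N)
    (ζ : Fin N → ℝ) (ε : ℝ) (hε : 0 < ε) :
    sSup ((fun Q : Measure ℝ => ((ProbabilityTheory.variance id Q : ℝ) : EReal)) ''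
        realWassersteinBall 2 Set.univ (empMeasure ζ) ε) =
      (((Real.sqrt ((1 / (N : ℝ)) * ∑ i, ζ i ^ 2 - ((1 / (N : ℝ)) * ∑ i, ζ i) ^ 2) + ε) ^ 2 :
        ℝ) : EReal) := by
  have hNr : (N:ℝ) ≠ 0 := Nat.cast_ne_zero.2 hN.ne'
  set m : ℝ := (1 / (N : ℝ)) * ∑ i, ζ i with hm_def
  set v : ℝ := (1 / (N : ℝ)) * ∑ i, ζ i ^ 2 - m ^ 2 with hv_def
  have hSz : ∑ i, ζ i = N * m := by rw [hm_def]; field_simp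
  have hSq : ∑ i, (ζ i - m)^2 = ∑ i, ζ i^2 - 2*m*(∑ i, ζ i) + N*m^2 := by
    have h : ∀ i ∈ Finset.univ, (ζ i - m)^2 = ζ i^2 - 2*m*ζ i + m^2 := fun i _ => by ring
    rw [Finset.sum_congr rfl h, Finset.sum_add_distrib, Finset.sum_sub_distrib,
      ← Finset.mul_sum, Finset.sum_const, Finset.card_univ, Fintype.card_fin, nsmul_eq_mul]
  have hvs : (N:ℝ)⁻¹ * ∑ i, (ζ i - m)^2 = v := by
    rw [hSq, hSz, hv_def]
    field_simp
    ring
  have hv0 : 0 ≤ v := by rw [← hvs]; positivity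
  set s : ℝ := Real.sqrt v with hs_def
  have hs0 : 0 ≤ s := Real.sqrt_nonneg v
  have hs2 : s^2 = v := Real.sq_sqrt hv0
  have hsum : (N:ℝ)⁻¹ * ∑ i, (ζ i - m)^2 = s^2 := by rw [hs2]; exact hvs
  have hzero : ∑ i, (ζ i - m) = 0 := by
    rw [Finset.sum_sub_distrib, Finset.sum_const, Finset.card_univ, Fintype.card_fin,
      nsmul_eq_mul, hSz]
    ring
  clear_value m v s
  apply le_antisymm
  · refine sSup_le ?_
    rintro x ⟨Q, hQ, rfl⟩
    exact EReal.coe_le_coe_iff.2 (upperBound hN ζ hε m s hs0 hsum hQ)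
  · by_cases hveq : v = 0
    · -- degenerate case: all points equal
      have hseq : s = 0 := by rw [hs_def, hveq, Real.sqrt_zero]
      have h0 : ∑ i, (ζ i - m)^2 = 0 := by
        have h := hvs
        rw [hveq, mul_eq_zero] at h
        rcases h with h | h
        · exact absurd h (inv_ne_zero hNr)
        · exact h
      have hζm : ∀ i, ζ i = m := by
        intro i
        have h1 := (Finset.sum_eq_zero_iff_of_nonneg
          (fun i _ => sq_nonneg (ζ i - m))).mp h0 i (Finset.mem_univ i)
        have h2 : ζ i - m = 0 := by
          exact (pow_eq_zero_iff two_ne_zero).mp h1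
        linarith
      have hemp : empMeasure ζ = empMeasure (fun _ : Fin 2 => m) := by
        have hζconst : ζ = fun _ => m := funext hζm
        rw [hζconst, empMeasure_const hN, empMeasure_const (by norm_num : (0:ℕ) < 2)]
      set η : Fin 2 → ℝ := ![m + ε, m - ε] with hη_def
      have hmem : empMeasure η ∈ realWassersteinBall 2 Set.univ (empMeasure ζ) ε := by
        rw [hemp]
        refine ballMem (by norm_num) _ η hε.le (le_of_eq ?_)
        rw [Fin.sum_univ_two]
        simp only [hη_def, Matrix.cons_val_zero, Matrix.cons_val_one, Matrix.head_cons]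
        ring
      have hvar : ProbabilityTheory.variance id (empMeasure η) = (s + ε)^2 := by
        rw [variance_empMeasure (by norm_num) η, Fin.sum_univ_two, Fin.sum_univ_two]
        simp only [hη_def, Matrix.cons_val_zero, Matrix.cons_val_one, Matrix.head_cons, hseq]
        ring
      exact le_sSup ⟨empMeasure η, hmem, by
        show ((ProbabilityTheory.variance id (empMeasure η) : ℝ) : EReal) = _
        rw [hvar]⟩
    · have hvpos : 0 < v := lt_of_le_of_ne hv0 (Ne.symm hveq)
      have hspos : 0 < s := by rw [hs_def]; exact Real.sqrt_pos.2 hvpos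
      set c : ℝ := 1 + ε / s with hc_def
      set η : Fin N → ℝ := fun i => m + c * (ζ i - m) with hη_def
      have hmem : empMeasure η ∈ realWassersteinBall 2 Set.univ (empMeasure ζ) ε := by
        refine ballMem hN ζ η hε.le (le_of_eq ?_)
        have h : ∀ i ∈ Finset.univ, (η i - ζ i)^2 = (ε/s)^2 * (ζ i - m)^2 := by
          intro i _
          simp only [hη_def, hc_def]
          field_simp
          ring
        calc (N:ℝ)⁻¹ * ∑ i, (η i - ζ i)^2
            = (ε/s)^2 * ((N:ℝ)⁻¹ * ∑ i, (ζ i - m)^2) := by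
              rw [Finset.sum_congr rfl h, ← Finset.mul_sum]; ring
          _ = (ε/s)^2 * s^2 := by rw [hsum]
          _ = ε^2 := by field_simp
      have hvar : ProbabilityTheory.variance id (empMeasure η) = (s + ε)^2 := by
        rw [variance_empMeasure hN η]
        have h1 : ∑ i, η i = N * m := by
          have h : ∀ i ∈ Finset.univ, η i = m + c * (ζ i - m) := fun i _ => rfl
          rw [Finset.sum_congr rfl h, Finset.sum_add_distrib, ← Finset.mul_sum, hzero,
            Finset.sum_const, Finset.card_univ, Fintype.card_fin, nsmul_eq_mul]
          ring
        have h2 : ∑ i, (η i)^2 = N*m^2 + c^2 * ∑ i, (ζ i - m)^2 := by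
          have h : ∀ i ∈ Finset.univ,
              (η i)^2 = m^2 + (2*m*c)*(ζ i - m) + c^2*(ζ i - m)^2 := by
            intro i _
            simp only [hη_def]
            ring
          rw [Finset.sum_congr rfl h, Finset.sum_add_distrib, Finset.sum_add_distrib,
            ← Finset.mul_sum, ← Finset.mul_sum, hzero, Finset.sum_const, Finset.card_univ,
            Fintype.card_fin, nsmul_eq_mul]
          ring
        have h3 : (N:ℝ)⁻¹ * (N*m^2 + c^2 * ∑ i, (ζ i - m)^2) - ((N:ℝ)⁻¹*(N*m))^2
            = c^2 * ((N:ℝ)⁻¹ * ∑ i, (ζ i - m)^2) := by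
          field_simp
          try ring
        rw [h1, h2, h3, hsum, hc_def]
        field_simp
        try ring
      exact le_sSup ⟨empMeasure η, hmem, by
        show ((ProbabilityTheory.variance id (empMeasure η) : ℝ) : EReal) = _
        rw [hvar]⟩
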